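/- Let R = ℤ[U_1, U_2, U_3, U_4] be the polynomial ring in four variables over ℤ, and let Q = (U_1(U_2 − U_4), U_3(U_2 − U_4)) ⊆ R. Then the R-module T = {x ∈ R/Q : (U_2 − U_4)·x = 0} is isomorphic to the quotient of the free module R² by the submodule generated by the three elements ((U_2 − U_4), 0), (0, (U_2 − U_4)), and (U_3, −U_1). (This computes Tor_1(R/L, R/Q) ≅ R'⟨x,y⟩/(U_3 x − U_1 y) over R' = R/(U_2 − U_4) for the total braid graph of Figure 12.) -/

import Mathlib

open MvPolynomial

/-- `R = ℤ[U₁, U₂, U₃, U₄]`, with `Uᵢ = X (i-1)`. -/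
abbrev R4 : Type := MvPolynomial (Fin 4) ℤ

/-- The ideal `Q = (U₁(U₂ − U₄), U₃(U₂ − U₄))` of the total braid graph of
Figure 12. -/
noncomputable def Q4 : Ideal R4 :=
  Ideal.span {X 0 * (X 1 - X 3), X 2 * (X 1 - X 3)}

noncomputable def gmap : R4 × R4 →ₗ[R4] R4 where
  toFun p := p.1 * X 0 + p.2 * X 2
  map_add' p q := by simp; ring
  map_smul' r p := by simp [smul_eq_mul]; ring

lemma gmap_apply (p : R4 × R4) : gmap p = p.1 * X 0 + p.2 * X 2 := rfl

lemma t_mul_gmap_mem (p : R4 × R4) : (X 1 - X 3 : R4) * gmap p ∈ Q4 := by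
  rw [Q4, Ideal.mem_span_pair]
  exact ⟨p.1, p.2, by rw [gmap_apply]; ring⟩

noncomputable def fmap : R4 × R4 →ₗ[R4]
    Submodule.torsionBy R4 (R4 ⧸ Q4) (X 1 - X 3) :=
  LinearMap.codRestrict _ (Q4.mkQ.comp gmap) (fun p => by
    rw [Submodule.mem_torsionBy_iff]
    show (X 1 - X 3 : R4) • Q4.mkQ (gmap p) = 0
    rw [← map_smul, smul_eq_mul, Submodule.mkQ_apply, Submodule.Quotient.mk_eq_zero]
    exact t_mul_gmap_mem p)

lemma t_ne : (X 1 - X 3 : R4) ≠ 0 := by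
  refine sub_ne_zero.mpr ?_
  exact fun h => by simpa using congrArg (coeff (Finsupp.single 1 1)) h

lemma x2_not_dvd : ¬ (X 2 : R4) ∣ X 0 := by
  rintro ⟨c, hc⟩
  have := congrArg (eval (fun i : Fin 4 => if i = 2 then (0:ℤ) else 1)) hc
  simp at this

lemma prime_X2 : Prime (X 2 : R4) := by
  let e : R4 ≃+* Polynomial (MvPolynomial (Fin 3) ℤ) :=
    ((renameEquiv ℤ (Equiv.swap (2 : Fin 4) 0)).trans (finSuccEquiv ℤ 3)).toRingEquiv
  rw [← MulEquiv.prime_iff e.toMulEquiv]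
  have h : e (X 2) = Polynomial.X := by
    show (finSuccEquiv ℤ 3) ((rename (Equiv.swap (2 : Fin 4) 0)) (X 2)) = Polynomial.X
    rw [rename_X, Equiv.swap_apply_left, finSuccEquiv_X_zero]
  rw [show e.toMulEquiv (X 2) = e (X 2) from rfl, h]
  exact Polynomial.prime_X

theorem torsionBy_quotient_iso_pair :
    Nonempty
      ((Submodule.torsionBy R4 (R4 ⧸ Q4) (X 1 - X 3)) ≃ₗ[R4]
        ((R4 × R4) ⧸ (Submodule.span R4
          {((X 1 - X 3 : R4), (0 : R4)), ((0 : R4), (X 1 - X 3 : R4)),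
            ((X 2 : R4), (-(X 0) : R4))}))) := by
  set t : R4 := X 1 - X 3 with ht
  have hsurj : Function.Surjective fmap := by
    rintro ⟨x, hx⟩
    obtain ⟨r, hr⟩ := Submodule.mkQ_surjective Q4 x
    rw [Submodule.mem_torsionBy_iff, ← hr, ← map_smul, smul_eq_mul,
      Submodule.mkQ_apply, Submodule.Quotient.mk_eq_zero, Q4,
      Ideal.mem_span_pair] at hx
    obtain ⟨f, g, hfg⟩ := hx
    have hr' : r = f * X 0 + g * X 2 := by
      have h2 : t * (f * X 0 + g * X 2) = t * r := by rw [ht]; linear_combination hfg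
      exact (mul_left_cancel₀ t_ne h2).symm
    refine ⟨(f, g), Subtype.ext ?_⟩
    show Q4.mkQ (gmap (f, g)) = x
    rw [← hr, hr']
    rfl
  have hker : LinearMap.ker fmap = Submodule.span R4
      {((t : R4), (0 : R4)), ((0 : R4), (t : R4)),
        ((X 2 : R4), (-(X 0) : R4))} := by
    apply le_antisymm
    · intro p hp
      rw [LinearMap.mem_ker] at hp
      have hval : Q4.mkQ (gmap p) = 0 := congrArg Subtype.val hp
      rw [Submodule.mkQ_apply, Submodule.Quotient.mk_eq_zero, Q4,
        Ideal.mem_span_pair] at hval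
      obtain ⟨f, g, hfg⟩ := hval
      rw [gmap_apply] at hfg
      have heq : (p.1 - f * t) * X 0 = X 2 * (g * t - p.2) := by
        rw [ht]; linear_combination -hfg
      have hdvd : (X 2 : R4) ∣ (p.1 - f * t) :=
        (prime_X2.2.2 _ _ ⟨g * t - p.2, heq⟩).resolve_right x2_not_dvd
      obtain ⟨c, hc⟩ := hdvd
      have hb : p.2 = g * t - c * X 0 := by
        have h3 : (c * X 0) * X 2 = (g * t - p.2) * X 2 := by
          have := heq
          rw [hc] at this
          linear_combination this
        have := mul_right_cancel₀ prime_X2.ne_zero h3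
        linear_combination this
      have hrw : p = f • ((t : R4), (0 : R4)) + g • ((0 : R4), (t : R4))
          + c • ((X 2 : R4), (-(X 0) : R4)) := by
        apply Prod.ext
        · simp [smul_eq_mul]
          linear_combination hc
        · simp [smul_eq_mul]
          linear_combination hb
      rw [hrw]
      refine Submodule.add_mem _ (Submodule.add_mem _ ?_ ?_) ?_ <;>
        refine Submodule.smul_mem _ _ (Submodule.subset_span ?_) <;> simp
    · rw [Submodule.span_le]
      rintro q hq
      simp only [Set.mem_insert_iff, Set.mem_singleton_iff] at hq
      have mem : ∀ q : R4 × R4,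
          (∃ a b : R4, a * (X 0 * (X 1 - X 3)) + b * (X 2 * (X 1 - X 3)) = gmap q) →
          q ∈ LinearMap.ker fmap := by
        intro q hq
        rw [LinearMap.mem_ker]
        apply Subtype.ext
        show Q4.mkQ (gmap q) = 0
        rw [Submodule.mkQ_apply, Submodule.Quotient.mk_eq_zero, Q4,
          Ideal.mem_span_pair]
        exact hq
      rcases hq with h | h | h <;> subst h
      · exact mem _ ⟨1, 0, by rw [gmap_apply, ht]; ring⟩
      · exact mem _ ⟨0, 1, by rw [gmap_apply, ht]; ring⟩
      · exact mem _ ⟨0, 0, by rw [gmap_apply]; ring⟩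
  exact ⟨((LinearMap.quotKerEquivOfSurjective fmap hsurj).symm.trans
    (Submodule.quotEquivOfEq _ _ hker))⟩
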